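/- Let (L_p)_{p≥1} be a sequence of positive reals decreasing to 0. Then the infinite product P(ζ) = Π_{p=1}^∞ (1 − (L_p²/p²)·ζ²) converges locally uniformly on ℂ and defines an entire function of infra-exponential growth: for every ε > 0 there is C_ε > 0 with |P(ζ)| ≤ C_ε e^{ε|ζ|} for all ζ ∈ ℂ. -/

import Mathlib

open Filter Finset

namespace HypSymbolAux

lemma one_le_prod_real {s : Finset ℕ} {f : ℕ → ℝ} (hf : ∀ i ∈ s, 1 ≤ f i) :
    1 ≤ ∏ i ∈ s, f i := by
  induction s using Finset.cons_induction with
  | empty => simp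
  | cons i s his ih =>
    rw [Finset.prod_cons]
    have h1 : 1 ≤ f i := hf i (Finset.mem_cons_self _ _)
    have h2 : 1 ≤ ∏ j ∈ s, f j := ih fun j hj => hf j (Finset.mem_cons_of_mem hj)
    nlinarith

lemma prod_le_prod_subset_real {s t : Finset ℕ} (h : s ⊆ t) {f : ℕ → ℝ}
    (hf : ∀ i ∈ t, 1 ≤ f i) : ∏ i ∈ s, f i ≤ ∏ i ∈ t, f i := by
  rw [← Finset.prod_sdiff h]
  have h1 : 1 ≤ ∏ i ∈ t \ s, f i :=
    one_le_prod_real fun i hi => hf i (Finset.sdiff_subset hi)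
  have h2 : 1 ≤ ∏ i ∈ s, f i := one_le_prod_real fun i hi => hf i (h hi)
  nlinarith

lemma norm_prod_one_add_le (s : Finset ℕ) (a : ℕ → ℂ) (b : ℕ → ℝ)
    (hab : ∀ i ∈ s, ‖a i‖ ≤ b i) :
    ‖∏ i ∈ s, (1 + a i)‖ ≤ ∏ i ∈ s, (1 + b i) := by
  rw [norm_prod]
  refine Finset.prod_le_prod (fun i _ => norm_nonneg _) fun i hi => ?_
  calc ‖1 + a i‖ ≤ ‖(1 : ℂ)‖ + ‖a i‖ := norm_add_le _ _
    _ = 1 + ‖a i‖ := by rw [norm_one]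
    _ ≤ 1 + b i := by linarith [hab i hi]

lemma norm_prod_one_add_sub_one_le (s : Finset ℕ) (a : ℕ → ℂ) (b : ℕ → ℝ)
    (hab : ∀ i ∈ s, ‖a i‖ ≤ b i) :
    ‖(∏ i ∈ s, (1 + a i)) - 1‖ ≤ (∏ i ∈ s, (1 + b i)) - 1 := by
  induction s using Finset.cons_induction with
  | empty => simp
  | cons i s his ih =>
    have hai : ‖a i‖ ≤ b i := hab i (Finset.mem_cons_self _ _)
    have hab' : ∀ j ∈ s, ‖a j‖ ≤ b j := fun j hj => hab j (Finset.mem_cons_of_mem hj)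
    have ih' := ih hab'
    rw [Finset.prod_cons, Finset.prod_cons]
    have hPQ : ‖∏ j ∈ s, (1 + a j)‖ ≤ ∏ j ∈ s, (1 + b j) :=
      norm_prod_one_add_le s a b hab'
    have hkey : (1 + a i) * (∏ j ∈ s, (1 + a j)) - 1
        = a i * (∏ j ∈ s, (1 + a j)) + ((∏ j ∈ s, (1 + a j)) - 1) := by ring
    rw [hkey]
    calc ‖a i * (∏ j ∈ s, (1 + a j)) + ((∏ j ∈ s, (1 + a j)) - 1)‖
        ≤ ‖a i * ∏ j ∈ s, (1 + a j)‖ + ‖(∏ j ∈ s, (1 + a j)) - 1‖ := norm_add_le _ _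
      _ = ‖a i‖ * ‖∏ j ∈ s, (1 + a j)‖ + ‖(∏ j ∈ s, (1 + a j)) - 1‖ := by rw [norm_mul]
      _ ≤ b i * (∏ j ∈ s, (1 + b j)) + ((∏ j ∈ s, (1 + b j)) - 1) := by
          have h0 : (0 : ℝ) ≤ ‖a i‖ := norm_nonneg _
          have h1 : (0 : ℝ) ≤ ‖∏ j ∈ s, (1 + a j)‖ := norm_nonneg _
          nlinarith
      _ = (1 + b i) * (∏ j ∈ s, (1 + b j)) - 1 := by ring

lemma norm_prod_range_sub_le (a : ℕ → ℂ) (b : ℕ → ℝ) (h : ∀ i, ‖a i‖ ≤ b i)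
    {m n : ℕ} (hmn : m ≤ n) :
    ‖(∏ p ∈ range n, (1 + a p)) - ∏ p ∈ range m, (1 + a p)‖
      ≤ (∏ p ∈ range n, (1 + b p)) - ∏ p ∈ range m, (1 + b p) := by
  have hb0 : ∀ i, (0 : ℝ) ≤ b i := fun i => (norm_nonneg _).trans (h i)
  have hsa : (∏ p ∈ range m, (1 + a p)) * (∏ p ∈ Ico m n, (1 + a p))
      = ∏ p ∈ range n, (1 + a p) := by
    simp only [Finset.range_eq_Ico]
    exact Finset.prod_Ico_consecutive _ (Nat.zero_le m) hmn
  have hsb : (∏ p ∈ range m, (1 + b p)) * (∏ p ∈ Ico m n, (1 + b p))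
      = ∏ p ∈ range n, (1 + b p) := by
    simp only [Finset.range_eq_Ico]
    exact Finset.prod_Ico_consecutive _ (Nat.zero_le m) hmn
  rw [← hsa, ← hsb]
  have hk : (∏ p ∈ range m, (1 + a p)) * (∏ p ∈ Ico m n, (1 + a p))
      - ∏ p ∈ range m, (1 + a p)
      = (∏ p ∈ range m, (1 + a p)) * ((∏ p ∈ Ico m n, (1 + a p)) - 1) := by ring
  rw [hk, norm_mul]
  have h1 : ‖∏ p ∈ range m, (1 + a p)‖ ≤ ∏ p ∈ range m, (1 + b p) :=
    norm_prod_one_add_le _ _ _ fun i _ => h i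
  have h2 : ‖(∏ p ∈ Ico m n, (1 + a p)) - 1‖ ≤ (∏ p ∈ Ico m n, (1 + b p)) - 1 :=
    norm_prod_one_add_sub_one_le _ _ _ fun i _ => h i
  have h3 : (1 : ℝ) ≤ ∏ p ∈ Ico m n, (1 + b p) :=
    one_le_prod_real fun i _ => by linarith [hb0 i]
  have h4 : (0 : ℝ) ≤ ‖∏ p ∈ range m, (1 + a p)‖ := norm_nonneg _
  have h5 : (0 : ℝ) ≤ ‖(∏ p ∈ Ico m n, (1 + a p)) - 1‖ := norm_nonneg _
  nlinarith

set_option maxHeartbeats 1000000 in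
/-- Key analytic estimate: `∏_{p<N} (1 + a²/(p+1)²) ≤ exp (5a + 3)` for `a ≥ 0`. -/
lemma prod_one_add_sq_div_le (a : ℝ) (ha : 0 ≤ a) (N : ℕ) :
    ∏ p ∈ range N, (1 + a ^ 2 / ((p : ℝ) + 1) ^ 2) ≤ Real.exp (5 * a + 3) := by
  set m := ⌈a⌉₊ with hm
  have ham : a ≤ (m : ℝ) := Nat.le_ceil a
  have hma : (m : ℝ) ≤ a + 1 := (Nat.ceil_lt_add_one ha).le
  rw [← Finset.prod_filter_mul_prod_filter_not (range N) (fun p => p < m)]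
  have hfact : ∀ p : ℕ, (1 : ℝ) ≤ 1 + a ^ 2 / ((p : ℝ) + 1) ^ 2 := fun p => by
    have : (0:ℝ) ≤ a ^ 2 / ((p : ℝ) + 1) ^ 2 := by positivity
    linarith
  have head : ∏ p ∈ (range N).filter (fun p => p < m), (1 + a ^ 2 / ((p : ℝ) + 1) ^ 2)
      ≤ Real.exp (3 * a + 3) := by
    have hsub : (range N).filter (fun p => p < m) ⊆ range m := by
      intro p hp
      simp only [Finset.mem_filter, Finset.mem_range] at hp ⊢
      exact hp.2
    have h1 : ∏ p ∈ (range N).filter (fun p => p < m), (1 + a ^ 2 / ((p : ℝ) + 1) ^ 2)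
        ≤ ∏ p ∈ range m, (1 + a ^ 2 / ((p : ℝ) + 1) ^ 2) :=
      prod_le_prod_subset_real hsub fun i _ => hfact i
    have h2 : ∏ p ∈ range m, (1 + a ^ 2 / ((p : ℝ) + 1) ^ 2)
        ≤ ∏ p ∈ range m, (2 * (m : ℝ) ^ 2 / ((p : ℝ) + 1) ^ 2) := by
      refine Finset.prod_le_prod (fun p _ => by positivity) fun p hp => ?_
      have hpm : (p : ℝ) + 1 ≤ (m : ℝ) := by
        have : p + 1 ≤ m := Finset.mem_range.mp hp
        exact_mod_cast this
    
      have hq : (0:ℝ) < ((p : ℝ) + 1) ^ 2 := by positivity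
      have hrw : 1 + a ^ 2 / ((p : ℝ) + 1) ^ 2
          = (((p : ℝ) + 1) ^ 2 + a ^ 2) / ((p : ℝ) + 1) ^ 2 := by field_simp
      rw [hrw, div_le_div_iff_of_pos_right hq]
      nlinarith
    have h3 : ∏ p ∈ range m, (2 * (m : ℝ) ^ 2 / ((p : ℝ) + 1) ^ 2)
        = 2 ^ m * ((m : ℝ) ^ m / (m.factorial : ℝ)) ^ 2 := by
      have hden : ∏ p ∈ range m, ((p : ℝ) + 1) ^ 2 = ((m.factorial : ℝ)) ^ 2 := by
        rw [Finset.prod_pow]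
        congr 1
        have : ∏ p ∈ range m, ((p : ℝ) + 1) = ((∏ p ∈ range m, (p + 1) : ℕ) : ℝ) := by
          push_cast; rfl
        rw [this, Finset.prod_range_add_one_eq_factorial]
      rw [Finset.prod_div_distrib, hden, Finset.prod_const]
      have hfacpos : (0:ℝ) < (m.factorial : ℝ) := by
        exact_mod_cast m.factorial_pos
      field_simp
      rw [Finset.card_range]
      ring
    have h4 : (m : ℝ) ^ m / (m.factorial : ℝ) ≤ Real.exp m := by
      have hsum := Real.sum_le_exp_of_nonneg (x := (m : ℝ)) (by positivity) (m + 1)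
      have hterm : (m : ℝ) ^ m / (m.factorial : ℝ)
          ≤ ∑ i ∈ range (m + 1), (m : ℝ) ^ i / (i.factorial : ℝ) := by
        refine Finset.single_le_sum (f := fun i => (m : ℝ) ^ i / (i.factorial : ℝ))
          (fun i _ => by positivity) (Finset.self_mem_range_succ m)
      calc (m : ℝ) ^ m / (m.factorial : ℝ)
          ≤ ∑ i ∈ range (m + 1), (m : ℝ) ^ i / (i.factorial : ℝ) := hterm
        _ ≤ Real.exp m := hsum
    have h5 : (2 : ℝ) ^ m ≤ Real.exp m := by
      have h2e : (2 : ℝ) ≤ Real.exp 1 := by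
        have := Real.add_one_le_exp (1 : ℝ); linarith
      calc (2 : ℝ) ^ m ≤ (Real.exp 1) ^ m := by
            exact pow_le_pow_left₀ (by norm_num) h2e m
        _ = Real.exp m := by rw [← Real.exp_nat_mul]; norm_num
    have h6 : ((m : ℝ) ^ m / (m.factorial : ℝ)) ^ 2 ≤ (Real.exp m) ^ 2 := by
      have hnn : (0:ℝ) ≤ (m : ℝ) ^ m / (m.factorial : ℝ) := by positivity
      exact pow_le_pow_left₀ hnn h4 2
    have h7 : 2 ^ m * ((m : ℝ) ^ m / (m.factorial : ℝ)) ^ 2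
        ≤ Real.exp m * (Real.exp m) ^ 2 := by
      have := Real.exp_pos (m : ℝ)
      nlinarith [pow_nonneg (by norm_num : (0:ℝ) ≤ 2) m,
        sq_nonneg ((m : ℝ) ^ m / (m.factorial : ℝ))]
    have h8 : Real.exp m * (Real.exp m) ^ 2 = Real.exp (3 * m) := by
      rw [← Real.exp_nat_mul]
      push_cast
      rw [← Real.exp_add]
      ring_nf
    calc ∏ p ∈ (range N).filter (fun p => p < m), (1 + a ^ 2 / ((p : ℝ) + 1) ^ 2)
        ≤ ∏ p ∈ range m, (2 * (m : ℝ) ^ 2 / ((p : ℝ) + 1) ^ 2) := h1.trans h2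
      _ = 2 ^ m * ((m : ℝ) ^ m / (m.factorial : ℝ)) ^ 2 := h3
      _ ≤ Real.exp (3 * m) := by rw [← h8]; exact h7
      _ ≤ Real.exp (3 * a + 3) := by
          apply Real.exp_le_exp.mpr; linarith
  have tail : ∏ p ∈ (range N).filter (fun p => ¬ p < m), (1 + a ^ 2 / ((p : ℝ) + 1) ^ 2)
      ≤ Real.exp (2 * a) := by
    have hfil : (range N).filter (fun p => ¬ p < m) = Finset.Ico m N := by
      ext p
      simp only [Finset.mem_filter, Finset.mem_range, Finset.mem_Ico, Nat.not_lt]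
      tauto
    rw [hfil]
    have step1 : ∏ p ∈ Ico m N, (1 + a ^ 2 / ((p : ℝ) + 1) ^ 2)
        ≤ Real.exp (∑ p ∈ Ico m N, a ^ 2 / ((p : ℝ) + 1) ^ 2) := by
      rw [Real.exp_sum]
      refine Finset.prod_le_prod (fun p _ => by positivity) fun p _ => ?_
      have := Real.add_one_le_exp (a ^ 2 / ((p : ℝ) + 1) ^ 2)
      linarith
    have step2 : ∑ p ∈ Ico m N, a ^ 2 / ((p : ℝ) + 1) ^ 2 ≤ 2 * a := by
      have hre : ∑ p ∈ Ico m N, a ^ 2 / ((p : ℝ) + 1) ^ 2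
          = a ^ 2 * ∑ p ∈ Ico m N, (((p : ℝ) + 1) ^ 2)⁻¹ := by
        rw [Finset.mul_sum]
        refine Finset.sum_congr rfl fun p _ => ?_
        rw [div_eq_mul_inv]
      have hshift : ∑ p ∈ Ico m N, (((p : ℝ) + 1) ^ 2)⁻¹
          = ∑ i ∈ Ico (m + 1) (N + 1), (((i : ℕ) : ℝ) ^ 2)⁻¹ := by
        rw [← Finset.sum_Ico_add' (fun i : ℕ => ((i : ℝ) ^ 2)⁻¹) m N 1]
        refine Finset.sum_congr rfl fun p _ => ?_
        push_cast
        ring_nf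
      have hsubset : Finset.Ico (m + 1) (N + 1) ⊆ Finset.Ioo m (N + 1) := by
        intro i hi
        simp only [Finset.mem_Ico, Finset.mem_Ioo] at hi ⊢
        omega
      have hsub : ∑ i ∈ Ico (m + 1) (N + 1), (((i : ℕ) : ℝ) ^ 2)⁻¹
          ≤ ∑ i ∈ Ioo m (N + 1), (((i : ℕ) : ℝ) ^ 2)⁻¹ :=
        Finset.sum_le_sum_of_subset_of_nonneg hsubset fun i _ _ => by positivity
      have hbound : ∑ i ∈ Ioo m (N + 1), (((i : ℕ) : ℝ) ^ 2)⁻¹ ≤ 2 / ((m : ℝ) + 1) := by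
        have := sum_Ioo_inv_sq_le (α := ℝ) m (N + 1)
        simpa using this
      have hmpos : (0:ℝ) < (m : ℝ) + 1 := by positivity
      have hfin : a ^ 2 * (2 / ((m : ℝ) + 1)) ≤ 2 * a := by
        rw [mul_div_assoc']
        rw [div_le_iff₀ hmpos]
        nlinarith
      calc ∑ p ∈ Ico m N, a ^ 2 / ((p : ℝ) + 1) ^ 2
          = a ^ 2 * ∑ p ∈ Ico m N, (((p : ℝ) + 1) ^ 2)⁻¹ := hre
        _ ≤ a ^ 2 * (2 / ((m : ℝ) + 1)) := by
            rw [hshift] at *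
            have ha2 : (0:ℝ) ≤ a ^ 2 := sq_nonneg a
            exact mul_le_mul_of_nonneg_left (hsub.trans hbound) ha2
        _ ≤ 2 * a := hfin
    exact step1.trans (Real.exp_le_exp.mpr step2)
  have hh0 : (0:ℝ) ≤ ∏ p ∈ (range N).filter (fun p => p < m),
      (1 + a ^ 2 / ((p : ℝ) + 1) ^ 2) :=
    le_trans zero_le_one (one_le_prod_real fun i _ => hfact i)
  have ht0 : (0:ℝ) ≤ ∏ p ∈ (range N).filter (fun p => ¬ p < m),
      (1 + a ^ 2 / ((p : ℝ) + 1) ^ 2) :=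
    le_trans zero_le_one (one_le_prod_real fun i _ => hfact i)
  calc (∏ p ∈ (range N).filter (fun p => p < m), (1 + a ^ 2 / ((p : ℝ) + 1) ^ 2))
        * ∏ p ∈ (range N).filter (fun p => ¬ p < m), (1 + a ^ 2 / ((p : ℝ) + 1) ^ 2)
      ≤ Real.exp (3 * a + 3) * Real.exp (2 * a) := by
        apply mul_le_mul head tail ht0 (Real.exp_pos _).le
    _ = Real.exp (5 * a + 3) := by rw [← Real.exp_add]; ring_nf

set_option maxHeartbeats 1000000 in
/-- The uniform growth bound for the partial products. -/
lemma growth_bound (L : ℕ → ℝ) (hpos : ∀ p : ℕ, 0 < L p) (hmono : Antitone L)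
    (hlim : Tendsto L atTop (nhds 0)) {ε : ℝ} (hε : 0 < ε) :
    ∃ C : ℝ, 0 < C ∧ ∀ (N : ℕ) (r : ℝ), 0 ≤ r →
      ∏ p ∈ range N, (1 + (L (p + 1)) ^ 2 / ((p : ℝ) + 1) ^ 2 * r ^ 2)
        ≤ C * Real.exp (ε * r) := by
  set δ := ε / 10 with hδdef
  have hδ : 0 < δ := by positivity
  obtain ⟨K, hK⟩ : ∃ K : ℕ, ∀ p ≥ K, L p ≤ δ := by
    have hev : ∀ᶠ p in atTop, L p < δ := hlim.eventually (gt_mem_nhds hδ)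
    obtain ⟨K, hK⟩ := eventually_atTop.mp hev
    exact ⟨K, fun p hp => (hK p hp).le⟩
  set σ := ε / (2 * ((K : ℝ) + 1)) with hσdef
  have hσ : 0 < σ := by positivity
  set A := (L 0) ^ 2 with hAdef
  have hA : 0 < A := by have := hpos 0; positivity
  set C1 := (1 + 4 * A / σ ^ 2) ^ K with hC1def
  have hC1 : 0 < C1 := by positivity
  refine ⟨C1 * Real.exp 3, by positivity, ?_⟩
  intro N r hr
  have hfact1 : ∀ p : ℕ, (1:ℝ) ≤ 1 + (L (p + 1)) ^ 2 / ((p : ℝ) + 1) ^ 2 * r ^ 2 := by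
    intro p
    have h0 : (0:ℝ) ≤ (L (p + 1)) ^ 2 / ((p : ℝ) + 1) ^ 2 * r ^ 2 := by positivity
    linarith
  rw [← Finset.prod_filter_mul_prod_filter_not (range N) (fun p => p < K)]
  -- head estimate
  have hhead : ∏ p ∈ (range N).filter (fun p => p < K),
      (1 + (L (p + 1)) ^ 2 / ((p : ℝ) + 1) ^ 2 * r ^ 2)
      ≤ C1 * Real.exp ((ε / 2) * r) := by
    have hfb : ∀ p ∈ (range N).filter (fun p => p < K),
        1 + (L (p + 1)) ^ 2 / ((p : ℝ) + 1) ^ 2 * r ^ 2 ≤ 1 + A * r ^ 2 := by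
      intro p _
      have hL : L (p + 1) ≤ L 0 := hmono (Nat.zero_le _)
      have hL0 : 0 < L (p + 1) := hpos _
      have h1 : (L (p + 1)) ^ 2 ≤ A := by
        rw [hAdef]
        nlinarith
      have h2 : (1:ℝ) ≤ ((p : ℝ) + 1) ^ 2 := by
        have : (0:ℝ) ≤ (p : ℝ) := Nat.cast_nonneg p
        nlinarith
      have h3 : (L (p + 1)) ^ 2 / ((p : ℝ) + 1) ^ 2 ≤ A := by
        calc (L (p + 1)) ^ 2 / ((p : ℝ) + 1) ^ 2 ≤ (L (p + 1)) ^ 2 / 1 := by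
              apply div_le_div_of_nonneg_left (by positivity) one_pos h2
          _ = (L (p + 1)) ^ 2 := by ring
          _ ≤ A := h1
      nlinarith [sq_nonneg r]
    have h1 : ∏ p ∈ (range N).filter (fun p => p < K),
        (1 + (L (p + 1)) ^ 2 / ((p : ℝ) + 1) ^ 2 * r ^ 2)
        ≤ ∏ p ∈ (range N).filter (fun p => p < K), (1 + A * r ^ 2) := by
      refine Finset.prod_le_prod (fun p _ => by positivity) hfb
    have hcard : ((range N).filter (fun p => p < K)).card ≤ K := by
      calc ((range N).filter (fun p => p < K)).card ≤ (range K).card := by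
            apply Finset.card_le_card
            intro p hp
            simp only [Finset.mem_filter, Finset.mem_range] at hp ⊢
            exact hp.2
        _ = K := Finset.card_range K
    have h2 : ∏ p ∈ (range N).filter (fun p => p < K), (1 + A * r ^ 2)
        = (1 + A * r ^ 2) ^ ((range N).filter (fun p => p < K)).card :=
      Finset.prod_const _
    have hbase : (1:ℝ) ≤ 1 + A * r ^ 2 := by nlinarith [sq_nonneg r]
    have h3 : (1 + A * r ^ 2) ^ ((range N).filter (fun p => p < K)).card
        ≤ (1 + A * r ^ 2) ^ K := pow_le_pow_right₀ hbase hcard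
    -- now bound (1 + A r²)^K
    have hrsq : r ^ 2 ≤ 4 / σ ^ 2 * Real.exp (σ * r) := by
      have e1 : σ * r / 2 + 1 ≤ Real.exp (σ * r / 2) := Real.add_one_le_exp _
      have e2 : Real.exp (σ * r / 2) * Real.exp (σ * r / 2) = Real.exp (σ * r) := by
        rw [← Real.exp_add]; ring_nf
      have e3 : (σ * r / 2) ^ 2 ≤ Real.exp (σ * r) := by
        have hσr : 0 ≤ σ * r / 2 := by positivity
        nlinarith
      have hσ2 : (0:ℝ) < σ ^ 2 := by positivity
      rw [div_mul_eq_mul_div, le_div_iff₀ hσ2]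
      nlinarith
    have h4 : 1 + A * r ^ 2 ≤ (1 + 4 * A / σ ^ 2) * Real.exp (σ * r) := by
      have hexp1 : (1:ℝ) ≤ Real.exp (σ * r) := Real.one_le_exp (by positivity)
      have := mul_le_mul_of_nonneg_left hrsq hA.le
      calc 1 + A * r ^ 2 ≤ 1 + A * (4 / σ ^ 2 * Real.exp (σ * r)) := by linarith
        _ ≤ Real.exp (σ * r) + (4 * A / σ ^ 2) * Real.exp (σ * r) := by
            have : A * (4 / σ ^ 2 * Real.exp (σ * r)) = (4 * A / σ ^ 2) * Real.exp (σ * r) := by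
              ring
            linarith
        _ = (1 + 4 * A / σ ^ 2) * Real.exp (σ * r) := by ring
    have h5 : (1 + A * r ^ 2) ^ K ≤ ((1 + 4 * A / σ ^ 2) * Real.exp (σ * r)) ^ K := by
      apply pow_le_pow_left₀ (by nlinarith [sq_nonneg r]) h4
    have h6 : ((1 + 4 * A / σ ^ 2) * Real.exp (σ * r)) ^ K
        = C1 * (Real.exp (σ * r)) ^ K := by rw [mul_pow]
    have h7 : (Real.exp (σ * r)) ^ K = Real.exp ((K : ℝ) * (σ * r)) := by
      rw [Real.exp_nat_mul]
    have h8 : Real.exp ((K : ℝ) * (σ * r)) ≤ Real.exp ((ε / 2) * r) := by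
      apply Real.exp_le_exp.mpr
      have hKσ : (K : ℝ) * σ ≤ ε / 2 := by
        have h2K : (0:ℝ) < 2 * ((K : ℝ) + 1) := by positivity
        have hKnn : (0:ℝ) ≤ (K : ℝ) := Nat.cast_nonneg K
        rw [hσdef, mul_div_assoc', div_le_div_iff₀ h2K two_pos]
        nlinarith
      calc (K : ℝ) * (σ * r) = ((K : ℝ) * σ) * r := by ring
        _ ≤ (ε / 2) * r := mul_le_mul_of_nonneg_right hKσ hr
    calc ∏ p ∈ (range N).filter (fun p => p < K),
          (1 + (L (p + 1)) ^ 2 / ((p : ℝ) + 1) ^ 2 * r ^ 2)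
        ≤ (1 + A * r ^ 2) ^ K := by rw [← h2] at h3; exact h1.trans h3
      _ ≤ C1 * (Real.exp (σ * r)) ^ K := by rw [← h6]; exact h5
      _ = C1 * Real.exp ((K : ℝ) * (σ * r)) := by rw [h7]
      _ ≤ C1 * Real.exp ((ε / 2) * r) := by
          exact mul_le_mul_of_nonneg_left h8 hC1.le
  -- tail estimate
  have htail : ∏ p ∈ (range N).filter (fun p => ¬ p < K),
      (1 + (L (p + 1)) ^ 2 / ((p : ℝ) + 1) ^ 2 * r ^ 2)
      ≤ Real.exp ((ε / 2) * r + 3) := by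
    have hfb : ∀ p ∈ (range N).filter (fun p => ¬ p < K),
        1 + (L (p + 1)) ^ 2 / ((p : ℝ) + 1) ^ 2 * r ^ 2
          ≤ 1 + (δ * r) ^ 2 / ((p : ℝ) + 1) ^ 2 := by
      intro p hp
      simp only [Finset.mem_filter, Finset.mem_range, Nat.not_lt] at hp
      have hLδ : L (p + 1) ≤ δ := hK (p + 1) (by omega)
      have hL0 : 0 < L (p + 1) := hpos _
      have hsq : (L (p + 1)) ^ 2 ≤ δ ^ 2 := by nlinarith
      have h1 : (L (p + 1)) ^ 2 * r ^ 2 ≤ (δ * r) ^ 2 := by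
        nlinarith [mul_le_mul_of_nonneg_right hsq (sq_nonneg r)]
      have h2 : (0:ℝ) < ((p : ℝ) + 1) ^ 2 := by positivity
      have h3 : (L (p + 1)) ^ 2 / ((p : ℝ) + 1) ^ 2 * r ^ 2
          = (L (p + 1)) ^ 2 * r ^ 2 / ((p : ℝ) + 1) ^ 2 := by ring
      rw [h3]
      have h4 : (L (p + 1)) ^ 2 * r ^ 2 / ((p : ℝ) + 1) ^ 2
          ≤ (δ * r) ^ 2 / ((p : ℝ) + 1) ^ 2 := by gcongr
      linarith
    have h1 : ∏ p ∈ (range N).filter (fun p => ¬ p < K),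
        (1 + (L (p + 1)) ^ 2 / ((p : ℝ) + 1) ^ 2 * r ^ 2)
        ≤ ∏ p ∈ (range N).filter (fun p => ¬ p < K),
          (1 + (δ * r) ^ 2 / ((p : ℝ) + 1) ^ 2) :=
      Finset.prod_le_prod (fun p _ => by positivity) hfb
    have h2 : ∏ p ∈ (range N).filter (fun p => ¬ p < K),
        (1 + (δ * r) ^ 2 / ((p : ℝ) + 1) ^ 2)
        ≤ ∏ p ∈ range N, (1 + (δ * r) ^ 2 / ((p : ℝ) + 1) ^ 2) := by
      apply prod_le_prod_subset_real (Finset.filter_subset _ _)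
      intro i _
      have : (0:ℝ) ≤ (δ * r) ^ 2 / ((i : ℝ) + 1) ^ 2 := by positivity
      linarith
    have h3 := prod_one_add_sq_div_le (δ * r) (by positivity) N
    have h4 : 5 * (δ * r) + 3 = (ε / 2) * r + 3 := by rw [hδdef]; ring
    rw [h4] at h3
    exact (h1.trans h2).trans h3
  have hh0 : (0:ℝ) ≤ ∏ p ∈ (range N).filter (fun p => ¬ p < K),
      (1 + (L (p + 1)) ^ 2 / ((p : ℝ) + 1) ^ 2 * r ^ 2) :=
    le_trans zero_le_one (one_le_prod_real fun i _ => hfact1 i)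
  calc (∏ p ∈ (range N).filter (fun p => p < K),
          (1 + (L (p + 1)) ^ 2 / ((p : ℝ) + 1) ^ 2 * r ^ 2))
        * ∏ p ∈ (range N).filter (fun p => ¬ p < K),
          (1 + (L (p + 1)) ^ 2 / ((p : ℝ) + 1) ^ 2 * r ^ 2)
      ≤ (C1 * Real.exp ((ε / 2) * r)) * Real.exp ((ε / 2) * r + 3) := by
        apply mul_le_mul hhead htail hh0 (by positivity)
    _ = C1 * Real.exp 3 * Real.exp (ε * r) := by
        rw [mul_assoc, ← Real.exp_add, mul_assoc, ← Real.exp_add]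
        ring_nf

end HypSymbolAux

set_option maxHeartbeats 1000000 in
theorem hyperfunction_operator_symbol (L : ℕ → ℝ)
    (hpos : ∀ p : ℕ, 0 < L p) (hmono : Antitone L)
    (hlim : Tendsto L atTop (nhds 0)) :
    ∃ P : ℂ → ℂ,
      TendstoLocallyUniformly
        (fun N : ℕ => fun ζ : ℂ =>
          ∏ p ∈ Finset.range N, (1 - ((L (p + 1) : ℂ) ^ 2 / ((p : ℂ) + 1) ^ 2) * ζ ^ 2))
        P atTop ∧
      Differentiable ℂ P ∧
      ∀ ε : ℝ, 0 < ε → ∃ C : ℝ, 0 < C ∧ ∀ ζ : ℂ,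
        ‖P ζ‖ ≤ C * Real.exp (ε * ‖ζ‖) := by
  classical
  set f : ℕ → ℂ → ℂ := fun N ζ =>
    ∏ p ∈ Finset.range N, (1 - ((L (p + 1) : ℂ) ^ 2 / ((p : ℂ) + 1) ^ 2) * ζ ^ 2) with hfdef
  set a : ℂ → ℕ → ℂ := fun ζ p => -(((L (p + 1) : ℂ) ^ 2 / ((p : ℂ) + 1) ^ 2) * ζ ^ 2)
    with hadef
  have hfa : ∀ N ζ, f N ζ = ∏ p ∈ range N, (1 + a ζ p) := by
    intro N ζ
    refine Finset.prod_congr rfl fun p _ => ?_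
    rw [hadef, sub_eq_add_neg]
  have hanorm : ∀ (ζ : ℂ) (p : ℕ),
      ‖a ζ p‖ = (L (p + 1)) ^ 2 / ((p : ℝ) + 1) ^ 2 * ‖ζ‖ ^ 2 := by
    intro ζ p
    have h1 : ‖(L (p + 1) : ℂ)‖ = L (p + 1) := by
      rw [Complex.norm_real, Real.norm_eq_abs, abs_of_pos (hpos _)]
    have h2 : ‖((p : ℂ) + 1)‖ = (p : ℝ) + 1 := by
      have hc : ((p : ℂ) + 1) = (((p : ℝ) + 1 : ℝ) : ℂ) := by push_cast; ring
      rw [hc, Complex.norm_real, Real.norm_eq_abs, abs_of_nonneg (by positivity)]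
    rw [hadef]
    simp only [norm_neg, norm_mul, norm_div, norm_pow, h1, h2]
  set b : ℝ → ℕ → ℝ := fun r p => (L (p + 1)) ^ 2 / ((p : ℝ) + 1) ^ 2 * r ^ 2 with hbdef
  have hb0 : ∀ r p, 0 ≤ b r p := by
    intro r p
    have := hpos (p + 1)
    positivity
  have hab : ∀ (ζ : ℂ) (R : ℝ), ‖ζ‖ ≤ R → ∀ p, ‖a ζ p‖ ≤ b R p := by
    intro ζ R hR p
    rw [hanorm, hbdef]
    have h1 : ‖ζ‖ ^ 2 ≤ R ^ 2 := by nlinarith [norm_nonneg ζ]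
    have h2 : (0:ℝ) ≤ (L (p + 1)) ^ 2 / ((p : ℝ) + 1) ^ 2 := by positivity
    exact mul_le_mul_of_nonneg_left h1 h2
  set q : ℝ → ℕ → ℝ := fun R N => ∏ p ∈ range N, (1 + b R p) with hqdef
  obtain ⟨C0, hC0pos, hC0⟩ := HypSymbolAux.growth_bound L hpos hmono hlim one_pos
  have hqcauchy : ∀ R : ℝ, 0 ≤ R → CauchySeq (q R) := by
    intro R hR
    have hmonoq : Monotone (q R) := by
      apply monotone_nat_of_le_succ
      intro n
      rw [hqdef]
      simp only
      rw [Finset.prod_range_succ]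
      have h1 : (0:ℝ) ≤ ∏ p ∈ range n, (1 + b R p) :=
        le_trans zero_le_one (HypSymbolAux.one_le_prod_real fun i _ => by
          linarith [hb0 R i])
      nlinarith [hb0 R n]
    have hbdd : BddAbove (Set.range (q R)) := by
      refine ⟨C0 * Real.exp (1 * R), ?_⟩
      rintro x ⟨N, rfl⟩
      exact hC0 N R hR
    exact (tendsto_atTop_ciSup hmonoq hbdd).cauchySeq
  have hdist : ∀ (R : ℝ) (ζ : ℂ), ‖ζ‖ ≤ R → ∀ m n, m ≤ n →
      ‖f n ζ - f m ζ‖ ≤ q R n - q R m := by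
    intro R ζ hζ m n hmn
    rw [hfa, hfa]
    exact HypSymbolAux.norm_prod_range_sub_le (a ζ) (b R) (hab ζ R hζ) hmn
  have hucauchy : ∀ R : ℝ, 0 ≤ R →
      UniformCauchySeqOn f atTop (Metric.closedBall (0 : ℂ) R) := by
    intro R hR
    rw [Metric.uniformCauchySeqOn_iff]
    intro ε hε
    obtain ⟨M, hM⟩ := Metric.cauchySeq_iff.mp (hqcauchy R hR) ε hε
    refine ⟨M, fun m hm n hn ζ hζ => ?_⟩
    have hζR : ‖ζ‖ ≤ R := by
      rw [Metric.mem_closedBall, dist_zero_right] at hζ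
      exact hζ
    rcases le_total m n with h | h
    · have h1 := hdist R ζ hζR m n h
      have h2 := hM n hn m hm
      rw [Real.dist_eq] at h2
      rw [dist_comm, dist_eq_norm]
      calc ‖f n ζ - f m ζ‖ ≤ q R n - q R m := h1
        _ ≤ |q R n - q R m| := le_abs_self _
        _ < ε := h2
    · have h1 := hdist R ζ hζR n m h
      have h2 := hM m hm n hn
      rw [Real.dist_eq] at h2
      rw [dist_eq_norm]
      calc ‖f m ζ - f n ζ‖ ≤ q R m - q R n := h1
        _ ≤ |q R m - q R n| := le_abs_self _
        _ < ε := h2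
  have hcseq : ∀ ζ : ℂ, CauchySeq fun N => f N ζ := by
    intro ζ
    exact (hucauchy ‖ζ‖ (norm_nonneg ζ)).cauchySeq
      (by simp [Metric.mem_closedBall, dist_zero_right])
  set P : ℂ → ℂ := fun ζ => limUnder atTop fun N => f N ζ with hPdef
  have hPt : ∀ ζ, Tendsto (fun N => f N ζ) atTop (nhds (P ζ)) := fun ζ =>
    (hcseq ζ).tendsto_limUnder
  have hTLU : TendstoLocallyUniformly f P atTop := by
    rw [tendstoLocallyUniformly_iff_forall_isCompact]
    intro S hS
    obtain ⟨R, hR⟩ := hS.isBounded.subset_closedBall 0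
    have hSsub : S ⊆ Metric.closedBall (0 : ℂ) (max R 0) :=
      hR.trans (Metric.closedBall_subset_closedBall (le_max_left _ _))
    exact ((hucauchy (max R 0) (le_max_right _ _)).tendstoUniformlyOn_of_tendsto
      fun ζ _ => hPt ζ).mono hSsub
  refine ⟨P, hTLU, ?_, ?_⟩
  · have hdiff : ∀ N, Differentiable ℂ (f N) := by
      intro N
      rw [hfdef]
      apply Differentiable.fun_finsetProd
      intro p _
      apply (differentiable_const _).sub
      exact (differentiable_const _).mul ((differentiable_id.pow 2))
    have h := (tendstoLocallyUniformlyOn_univ.mpr hTLU).differentiableOn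
      (Eventually.of_forall fun N => (hdiff N).differentiableOn) isOpen_univ
    rw [← differentiableOn_univ]
    exact h
  · intro ε hε
    obtain ⟨C, hCpos, hC⟩ := HypSymbolAux.growth_bound L hpos hmono hlim hε
    refine ⟨C, hCpos, fun ζ => ?_⟩
    have hnorm : ∀ N, ‖f N ζ‖ ≤ C * Real.exp (ε * ‖ζ‖) := by
      intro N
      have h1 : ‖f N ζ‖ ≤ ∏ p ∈ range N, (1 + b ‖ζ‖ p) := by
        rw [hfa]
        exact HypSymbolAux.norm_prod_one_add_le _ _ _ fun p _ => hab ζ ‖ζ‖ le_rfl p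
      exact h1.trans (hC N ‖ζ‖ (norm_nonneg ζ))
    exact le_of_tendsto (hPt ζ).norm (Eventually.of_forall hnorm)
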